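/- The tensor T = a₁⊗(b₁⊗c₂ + b₂⊗c₁) + a₂⊗b₁⊗c₁ + a₃⊗b₃⊗c₃ ∈ ℂ³⊗ℂ³⊗ℂ³ (with {a_i},{b_i},{c_i} bases) has tensor rank exactly 4. -/

import Mathlib

open scoped TensorProduct

/-- Coefficient array of the tensor `a₀⊗b₀⊗c₁ + a₀⊗b₁⊗c₀ + a₁⊗b₀⊗c₀ + a₂⊗b₂⊗c₂`. -/
def T3coef (p q s : Fin 3) : ℂ :=
  (if p = 0 ∧ q = 0 ∧ s = 1 then 1 else 0) + (if p = 0 ∧ q = 1 ∧ s = 0 then 1 else 0)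
    + (if p = 1 ∧ q = 0 ∧ s = 0 then 1 else 0) + (if p = 2 ∧ q = 2 ∧ s = 2 then 1 else 0)

lemma keystep (X Y Z : Fin 3 → Fin 3 → ℂ)
    (H : ∀ p q s : Fin 3, ∑ i, X p i * Y q i * Z s i = T3coef p q s) (i q s : Fin 3) :
    (Matrix.of X).det * (Y q i * Z s i) = ∑ p, (Matrix.of X).adjugate i p * T3coef p q s := by
  have h1 : ∀ j, ∑ p, (Matrix.of X).adjugate i p * X p j
      = if i = j then (Matrix.of X).det else 0 := by
    intro j
    have h := congrFun (congrFun (Matrix.adjugate_mul (Matrix.of X)) i) j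
    simpa [Matrix.mul_apply, Matrix.one_apply] using h
  calc (Matrix.of X).det * (Y q i * Z s i)
      = ∑ j, (if i = j then (Matrix.of X).det else 0) * (Y q j * Z s j) := by
        simp [ite_mul]
    _ = ∑ j, (∑ p, (Matrix.of X).adjugate i p * X p j) * (Y q j * Z s j) := by
        simp_rw [h1]
    _ = ∑ p, (Matrix.of X).adjugate i p * ∑ j, X p j * Y q j * Z s j := by
        simp_rw [Finset.sum_mul, Finset.mul_sum, mul_assoc]
        rw [Finset.sum_comm]
    _ = ∑ p, (Matrix.of X).adjugate i p * T3coef p q s := by simp_rw [H]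

/-- There is no decomposition of the type-II tensor into three decomposable summands
(in coordinates). -/
lemma aux_no_rank_three (X Y Z : Fin 3 → Fin 3 → ℂ)
    (H : ∀ p q s : Fin 3, ∑ i, X p i * Y q i * Z s i = T3coef p q s) : False := by
  set M := Matrix.of X with hM
  have K := keystep X Y Z H
  have e1 : ∀ i, M.det * (Y 0 i * Z 1 i) = M.adjugate i 0 := by
    intro i; simpa [T3coef, Fin.sum_univ_three] using K i 0 1
  have e2 : ∀ i, M.det * (Y 1 i * Z 0 i) = M.adjugate i 0 := by
    intro i; simpa [T3coef, Fin.sum_univ_three] using K i 1 0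
  have e3 : ∀ i, M.det * (Y 0 i * Z 0 i) = M.adjugate i 1 := by
    intro i; simpa [T3coef, Fin.sum_univ_three] using K i 0 0
  have e4 : ∀ i, M.det * (Y 1 i * Z 1 i) = 0 := by
    intro i; simpa [T3coef, Fin.sum_univ_three] using K i 1 1
  have hz : ∀ i, M.adjugate i 0 = 0 := by
    intro i
    have hsq : M.adjugate i 0 ^ 2 = 0 := by
      linear_combination (-(M.adjugate i 0)) * e1 i - (M.det * Y 0 i * Z 1 i) * e2 i
        + (M.det * Y 1 i * Z 1 i) * e3 i + M.adjugate i 1 * e4 i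
    exact pow_eq_zero_iff (two_ne_zero) |>.mp hsq
  have hdet : M.det = 0 := by
    have h00 := congrFun (congrFun (Matrix.mul_adjugate M) 0) 0
    simp only [Matrix.mul_apply, Matrix.smul_apply, Matrix.one_apply_eq, smul_eq_mul,
      mul_one] at h00
    rw [← h00]
    simp [hz]
  obtain ⟨v, hv0, hv⟩ := Matrix.exists_vecMul_eq_zero_iff.mpr hdet
  have hvi : ∀ j, v 0 * X 0 j + v 1 * X 1 j + v 2 * X 2 j = 0 := by
    intro j
    have h := congrFun hv j
    simpa [hM, Matrix.vecMul, dotProduct, Fin.sum_univ_three] using h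
  have hA : v 0 = 0 := by
    have h0 := H 0 0 1; have h1 := H 1 0 1; have h2 := H 2 0 1
    simp only [T3coef, Fin.sum_univ_three] at h0 h1 h2
    norm_num [Fin.ext_iff] at h0 h1 h2
    linear_combination (-(v 0)) * h0 - v 1 * h1 - v 2 * h2 + (Y 0 0 * Z 1 0) * hvi 0
      + (Y 0 1 * Z 1 1) * hvi 1 + (Y 0 2 * Z 1 2) * hvi 2
  have hB : v 1 = 0 := by
    have h0 := H 0 0 0; have h1 := H 1 0 0; have h2 := H 2 0 0
    simp only [T3coef, Fin.sum_univ_three] at h0 h1 h2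
    norm_num [Fin.ext_iff] at h0 h1 h2
    linear_combination (-(v 0)) * h0 - v 1 * h1 - v 2 * h2 + (Y 0 0 * Z 0 0) * hvi 0
      + (Y 0 1 * Z 0 1) * hvi 1 + (Y 0 2 * Z 0 2) * hvi 2
  have hC : v 2 = 0 := by
    have h0 := H 0 2 2; have h1 := H 1 2 2; have h2 := H 2 2 2
    simp only [T3coef, Fin.sum_univ_three] at h0 h1 h2
    norm_num [Fin.ext_iff] at h0 h1 h2
    linear_combination (-(v 0)) * h0 - v 1 * h1 - v 2 * h2 + (Y 2 0 * Z 2 0) * hvi 0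
      + (Y 2 1 * Z 2 1) * hvi 1 + (Y 2 2 * Z 2 2) * hvi 2
  apply hv0
  ext j
  fin_cases j <;> simpa using by first | exact hA | exact hB | exact hC

/-- Summing a padded family over `Fin 3` equals summing the original family over `Fin r`. -/
lemma pad_sum {r : ℕ} (hr : r ≤ 3) (g : Fin r → ℂ) :
    ∑ i : Fin 3, (if h : (i : ℕ) < r then g ⟨i, h⟩ else 0) = ∑ i : Fin r, g i := by
  have hf3 := Fin.sum_univ_eq_sum_range (fun i : ℕ => if h : i < r then g ⟨i, h⟩ else 0) 3
  have hfr := Fin.sum_univ_eq_sum_range (fun i : ℕ => if h : i < r then g ⟨i, h⟩ else 0) r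
  rw [hf3, ← Finset.sum_subset (Finset.range_subset_range.mpr hr)
    (fun i _ hi => dif_neg (by simpa using hi)), ← hfr]
  exact Finset.sum_congr rfl fun i _ => by simp

/-- The tensor `a₁⊗(b₁⊗c₂ + b₂⊗c₁) + a₂⊗b₁⊗c₁ + a₃⊗b₃⊗c₃`
(with `{aᵢ}, {bᵢ}, {cᵢ}` bases of 3-dimensional spaces) has tensor rank exactly 4. -/
theorem rank_type_ii_tensor_eq_four {A B C : Type*}
    [AddCommGroup A] [Module ℂ A] [AddCommGroup B] [Module ℂ B] [AddCommGroup C] [Module ℂ C]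
    (a : Module.Basis (Fin 3) ℂ A) (b : Module.Basis (Fin 3) ℂ B) (c : Module.Basis (Fin 3) ℂ C) :
    IsLeast {r : ℕ | ∃ (x : Fin r → A) (y : Fin r → B) (z : Fin r → C),
        (a 0 ⊗ₜ[ℂ] (b 0 ⊗ₜ[ℂ] c 1 + b 1 ⊗ₜ[ℂ] c 0) + a 1 ⊗ₜ[ℂ] (b 0 ⊗ₜ[ℂ] c 0)
          + a 2 ⊗ₜ[ℂ] (b 2 ⊗ₜ[ℂ] c 2)
          : A ⊗[ℂ] (B ⊗[ℂ] C))
          = ∑ i, x i ⊗ₜ[ℂ] (y i ⊗ₜ[ℂ] z i)} 4 := by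
  constructor
  · refine ⟨![a 0, a 0, a 1, a 2], ![b 0, b 1, b 0, b 2], ![c 1, c 0, c 0, c 2], ?_⟩
    simp [Fin.sum_univ_four, TensorProduct.tmul_add]
  · rintro r ⟨x, y, z, hxyz⟩
    by_contra hlt
    push_neg at hlt
    have hr : r ≤ 3 := by omega
    have key : ∀ p q s : Fin 3,
        ∑ i : Fin r, (c.repr (z i)) s * (b.repr (y i)) q * (a.repr (x i)) p = T3coef p q s := by
      intro p q s
      have h := congrArg (fun t => (a.tensorProduct (b.tensorProduct c)).repr t (p, q, s)) hxyz
      simp only [map_add, Module.Basis.tensorProduct_repr_tmul_apply, Module.Basis.repr_self, smul_eq_mul,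
        Finsupp.add_apply, map_sum, Finsupp.coe_finset_sum, Finset.sum_apply,
        Finsupp.single_apply] at h
      rw [← h]
      fin_cases p <;> fin_cases q <;> fin_cases s <;> simp [T3coef]
    set X : Fin 3 → Fin 3 → ℂ :=
      fun p i => if h : (i : ℕ) < r then (a.repr (x ⟨i, h⟩)) p else 0 with hX
    set Y : Fin 3 → Fin 3 → ℂ :=
      fun q i => if h : (i : ℕ) < r then (b.repr (y ⟨i, h⟩)) q else 0 with hY
    set Z : Fin 3 → Fin 3 → ℂ :=
      fun s i => if h : (i : ℕ) < r then (c.repr (z ⟨i, h⟩)) s else 0 with hZ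
    refine aux_no_rank_three X Y Z fun p q s => ?_
    have hsummand : ∀ i : Fin 3, X p i * Y q i * Z s i
        = if h : (i : ℕ) < r then
            (c.repr (z ⟨i, h⟩)) s * (b.repr (y ⟨i, h⟩)) q * (a.repr (x ⟨i, h⟩)) p else 0 := by
      intro i
      by_cases h : (i : ℕ) < r
      · simp only [hX, hY, hZ, dif_pos h]; ring
      · simp [hX, hY, hZ, dif_neg h]
    rw [Finset.sum_congr rfl fun i _ => hsummand i,
      pad_sum hr (fun i => (c.repr (z i)) s * (b.repr (y i)) q * (a.repr (x i)) p), key]
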